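/- The function y ↦ y·ζ(y)/φ(y), where φ(y) = y - 1 - log y and ζ(y) = (y-1)^2/y, extended by the value 2 at y = 1, is nondecreasing on (0,∞), tends to 0 as y → 0+, and tends to +∞ as y → +∞. -/

import Mathlib

open Real Filter

noncomputable def yZetaPhiRatio (y : ℝ) : ℝ :=
  if y = 1 then 2 else (y - 1) ^ 2 / (y - 1 - Real.log y)

lemma phi_pos {y : ℝ} (hy : 0 < y) (hy1 : y ≠ 1) : 0 < y - 1 - Real.log y := by
  have := Real.log_lt_sub_one_of_pos hy hy1
  linarith

lemma hasDerivAt_g {y : ℝ} (hy : 0 < y) :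
    HasDerivAt (fun y => 2*(y - 1 - Real.log y) - (y-1)^2/y) ((y-1)^2/y^2) y := by
  have h1 : HasDerivAt (fun y : ℝ => y - 1 - Real.log y) (1 - y⁻¹) y := by
    exact ((hasDerivAt_id y).sub_const 1).sub (Real.hasDerivAt_log hy.ne')
  have h2 : HasDerivAt (fun y : ℝ => (y-1)^2) (2*(y-1)) y := by
    refine (((hasDerivAt_id y).sub_const 1).pow 2).congr_deriv ?_; simp
  have h3 : HasDerivAt (fun y : ℝ => (y-1)^2/y) ((2*(y-1)*y - (y-1)^2*1)/y^2) y :=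
    h2.div (hasDerivAt_id y) hy.ne'
  have := (h1.const_mul 2).sub h3
  refine this.congr_deriv ?_
  field_simp
  ring

lemma hasDerivAt_k {y : ℝ} (hy : 0 < y) :
    HasDerivAt (fun y => 2*(y - 1 - Real.log y) - (y-1)^2) (-(2*(y-1)^2/y)) y := by
  have h1 : HasDerivAt (fun y : ℝ => y - 1 - Real.log y) (1 - y⁻¹) y := by
    exact ((hasDerivAt_id y).sub_const 1).sub (Real.hasDerivAt_log hy.ne')
  have h2 : HasDerivAt (fun y : ℝ => (y-1)^2) (2*(y-1)) y := by
    refine (((hasDerivAt_id y).sub_const 1).pow 2).congr_deriv ?_; simp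
  have := (h1.const_mul 2).sub h2
  refine this.congr_deriv ?_
  field_simp
  ring

lemma monotoneOn_g : MonotoneOn (fun y => 2*(y - 1 - Real.log y) - (y-1)^2/y) (Set.Ioi (0:ℝ)) := by
  have hint : interior (Set.Ioi (0:ℝ)) = Set.Ioi 0 := isOpen_Ioi.interior_eq
  apply monotoneOn_of_deriv_nonneg (convex_Ioi 0)
  · exact fun x hx => ((hasDerivAt_g hx).continuousAt).continuousWithinAt
  · rw [hint]; exact fun x hx => ((hasDerivAt_g hx).differentiableAt).differentiableWithinAt
  · rw [hint]; intro x hx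
    rw [(hasDerivAt_g hx).deriv]
    exact div_nonneg (sq_nonneg _) (sq_nonneg _)

lemma antitoneOn_k : AntitoneOn (fun y => 2*(y - 1 - Real.log y) - (y-1)^2) (Set.Ioi (0:ℝ)) := by
  have hint : interior (Set.Ioi (0:ℝ)) = Set.Ioi 0 := isOpen_Ioi.interior_eq
  apply antitoneOn_of_deriv_nonpos (convex_Ioi 0)
  · exact fun x hx => ((hasDerivAt_k hx).continuousAt).continuousWithinAt
  · rw [hint]; exact fun x hx => ((hasDerivAt_k hx).differentiableAt).differentiableWithinAt
  · rw [hint]; intro x hx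
    rw [(hasDerivAt_k hx).deriv]
    have hx0 : (0:ℝ) < x := hx
    have : 0 ≤ 2*(x-1)^2/x := by positivity
    linarith

lemma g_nonpos {x : ℝ} (hx : 0 < x) (hx1 : x ≤ 1) :
    2*(x - 1 - Real.log x) - (x-1)^2/x ≤ 0 := by
  have := monotoneOn_g hx (by norm_num : (1:ℝ) ∈ Set.Ioi (0:ℝ)) hx1
  simpa using this

lemma g_nonneg {x : ℝ} (hx1 : 1 ≤ x) :
    0 ≤ 2*(x - 1 - Real.log x) - (x-1)^2/x := by
  have := monotoneOn_g (by norm_num : (1:ℝ) ∈ Set.Ioi (0:ℝ)) (lt_of_lt_of_le one_pos hx1) hx1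
  simpa using this

lemma k_nonneg {x : ℝ} (hx : 0 < x) (hx1 : x ≤ 1) :
    (x-1)^2 ≤ 2*(x - 1 - Real.log x) := by
  have := antitoneOn_k hx (by norm_num : (1:ℝ) ∈ Set.Ioi (0:ℝ)) hx1
  simp at this
  linarith

lemma k_nonpos {x : ℝ} (hx1 : 1 ≤ x) :
    2*(x - 1 - Real.log x) ≤ (x-1)^2 := by
  have := antitoneOn_k (by norm_num : (1:ℝ) ∈ Set.Ioi (0:ℝ)) (lt_of_lt_of_le one_pos hx1) hx1
  simp at this
  linarith

lemma hasDerivAt_h {y : ℝ} (hy : 0 < y) (hy1 : y ≠ 1) :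
    HasDerivAt (fun y => (y-1)^2/(y - 1 - Real.log y))
      ((y-1)*(2*(y - 1 - Real.log y) - (y-1)^2/y)/(y - 1 - Real.log y)^2) y := by
  have hphi := phi_pos hy hy1
  have h1 : HasDerivAt (fun y : ℝ => y - 1 - Real.log y) (1 - y⁻¹) y := by
    exact ((hasDerivAt_id y).sub_const 1).sub (Real.hasDerivAt_log hy.ne')
  have h2 : HasDerivAt (fun y : ℝ => (y-1)^2) (2*(y-1)) y := by
    refine (((hasDerivAt_id y).sub_const 1).pow 2).congr_deriv ?_; simp
  have := h2.div h1 hphi.ne'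
  refine this.congr_deriv ?_
  field_simp

lemma monotoneOn_h_lt : MonotoneOn (fun y => (y-1)^2/(y - 1 - Real.log y)) (Set.Ioo (0:ℝ) 1) := by
  have hint : interior (Set.Ioo (0:ℝ) 1) = Set.Ioo 0 1 := isOpen_Ioo.interior_eq
  apply monotoneOn_of_deriv_nonneg (convex_Ioo 0 1)
  · exact fun x hx => ((hasDerivAt_h hx.1 hx.2.ne).continuousAt).continuousWithinAt
  · rw [hint]
    exact fun x hx => ((hasDerivAt_h hx.1 hx.2.ne).differentiableAt).differentiableWithinAt
  · rw [hint]; intro x hx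
    rw [(hasDerivAt_h hx.1 hx.2.ne).deriv]
    apply div_nonneg _ (sq_nonneg _)
    have ha : x - 1 ≤ 0 := by linarith [hx.2]
    have hb := g_nonpos hx.1 hx.2.le
    nlinarith

lemma monotoneOn_h_gt : MonotoneOn (fun y => (y-1)^2/(y - 1 - Real.log y)) (Set.Ioi (1:ℝ)) := by
  have hint : interior (Set.Ioi (1:ℝ)) = Set.Ioi 1 := isOpen_Ioi.interior_eq
  apply monotoneOn_of_deriv_nonneg (convex_Ioi 1)
  · intro x hx
    have hx1 : (1:ℝ) < x := hx
    exact ((hasDerivAt_h (by linarith) hx1.ne').continuousAt).continuousWithinAt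
  · rw [hint]; intro x hx
    have hx1 : (1:ℝ) < x := hx
    exact ((hasDerivAt_h (by linarith) hx1.ne').differentiableAt).differentiableWithinAt
  · rw [hint]; intro x hx
    have hx1 : (1:ℝ) < x := hx
    rw [(hasDerivAt_h (by linarith) hx1.ne').deriv]
    apply div_nonneg _ (sq_nonneg _)
    exact mul_nonneg (by linarith) (g_nonneg hx1.le)

lemma h_le_two {x : ℝ} (hx : 0 < x) (hx1 : x < 1) :
    (x-1)^2/(x - 1 - Real.log x) ≤ 2 := by
  rw [div_le_iff₀ (phi_pos hx hx1.ne)]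
  have := k_nonneg hx hx1.le
  linarith

lemma two_le_h {x : ℝ} (hx1 : 1 < x) :
    2 ≤ (x-1)^2/(x - 1 - Real.log x) := by
  rw [le_div_iff₀ (phi_pos (by linarith) hx1.ne')]
  have := k_nonpos hx1.le
  linarith

theorem yZetaPhiRatio_monotone_and_limits :
    MonotoneOn yZetaPhiRatio (Set.Ioi (0 : ℝ)) ∧
    Filter.Tendsto yZetaPhiRatio (nhdsWithin 0 (Set.Ioi 0)) (nhds 0) ∧
    Filter.Tendsto yZetaPhiRatio Filter.atTop Filter.atTop := by
  refine ⟨?_, ?_, ?_⟩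
  · -- Monotone
    intro x hx y hy hxy
    have hx0 : (0:ℝ) < x := hx
    have hy0 : (0:ℝ) < y := hy
    rcases lt_trichotomy x 1 with hx1 | hx1 | hx1
    · rcases lt_trichotomy y 1 with hy1 | hy1 | hy1
      · simp only [yZetaPhiRatio, if_neg hx1.ne, if_neg hy1.ne]
        exact monotoneOn_h_lt ⟨hx0, hx1⟩ ⟨hy0, hy1⟩ hxy
      · simp only [yZetaPhiRatio, if_neg hx1.ne, if_pos hy1]
        exact h_le_two hx0 hx1
      · simp only [yZetaPhiRatio, if_neg hx1.ne, if_neg hy1.ne']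
        exact le_trans (h_le_two hx0 hx1) (two_le_h hy1)
    · subst hx1
      rcases eq_or_lt_of_le hxy with h | hy1
      · rw [← h]
      · simp only [yZetaPhiRatio, if_pos rfl, if_neg hy1.ne']
        exact two_le_h hy1
    · have hy1 : 1 < y := lt_of_lt_of_le hx1 hxy
      simp only [yZetaPhiRatio, if_neg hx1.ne', if_neg hy1.ne']
      exact monotoneOn_h_gt hx1 hy1 hxy
  · -- limit at 0+
    have heq : ∀ᶠ y in nhdsWithin (0:ℝ) (Set.Ioi 0),
        yZetaPhiRatio y = (y-1)^2 * (y - 1 - Real.log y)⁻¹ := by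
      filter_upwards [Ioo_mem_nhdsGT_of_mem (by norm_num : (0:ℝ) ∈ Set.Ico 0 1)] with y hy
      rw [yZetaPhiRatio, if_neg hy.2.ne, div_eq_mul_inv]
    have hnum : Tendsto (fun y : ℝ => (y-1)^2) (nhdsWithin 0 (Set.Ioi 0)) (nhds 1) := by
      have hc : ContinuousAt (fun y : ℝ => (y-1)^2) 0 := by fun_prop
      have := hc.tendsto
      norm_num at this
      exact this.mono_left nhdsWithin_le_nhds
    have hphi : Tendsto (fun y : ℝ => y - 1 - Real.log y) (nhdsWithin 0 (Set.Ioi 0)) atTop := by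
      have hlog : Tendsto (fun y : ℝ => -Real.log y) (nhdsWithin 0 (Set.Ioi 0)) atTop :=
        tendsto_neg_atBot_atTop.comp Real.tendsto_log_nhdsGT_zero
      have hc : Tendsto (fun y : ℝ => y - 1) (nhdsWithin 0 (Set.Ioi 0)) (nhds (-1)) := by
        have hc' : ContinuousAt (fun y : ℝ => y - 1) 0 := by fun_prop
        have := hc'.tendsto
        norm_num at this
        exact this.mono_left nhdsWithin_le_nhds
      have := hc.add_atTop hlog
      simpa [sub_eq_add_neg] using this
    have : Tendsto yZetaPhiRatio (nhdsWithin 0 (Set.Ioi 0)) (nhds (1 * 0)) := by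
      apply Tendsto.congr' (heq.mono fun y hy => hy.symm)
      exact hnum.mul hphi.inv_tendsto_atTop
    simpa using this
  · -- limit at atTop
    apply tendsto_atTop_mono' _ _ (tendsto_atTop_add_const_right atTop (-1) tendsto_id)
    filter_upwards [eventually_gt_atTop (1:ℝ)] with y hy1
    have hy0 : (0:ℝ) < y := by linarith
    have hphi := phi_pos hy0 hy1.ne'
    have hlog : 0 ≤ Real.log y := Real.log_nonneg hy1.le
    rw [yZetaPhiRatio, if_neg hy1.ne']
    have h1 : (y-1)^2/(y-1) ≤ (y-1)^2/(y - 1 - Real.log y) :=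
      div_le_div_of_nonneg_left (sq_nonneg _) hphi (by linarith)
    have h2 : (y-1)^2/(y-1) = y - 1 := by
      rw [sq, mul_div_assoc, div_self (by linarith : y - 1 ≠ 0), mul_one]
    simp only [id]
    calc y + -1 = (y-1)^2/(y-1) := by rw [h2]; ring
    _ ≤ _ := h1
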